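/- Let m = 2k+1 with k ≥ 2. Define the set F_m = {σ₀, …, σ_{m-1}} of permutations of ℤ_m by: σ₀ = id; for i = 2j+1 with 0 ≤ j ≤ k-1, σ_i = γ_i·(m-1, j+2) (composition left-to-right); for i = 2j with 1 ≤ j ≤ k-2, σ_i = γ_i·(m-1, k+j+1); σ_{m-3} = γ_{m-3}·(m-1, 0); and σ_{m-1} is the single m-cycle given by σ_{m-1}(a) = m-a+1 for 3 ≤ a ≤ k, σ_{m-1}(a) = m-a+2 for k+2 ≤ a ≤ m-2, σ_{m-1}(0) = 3, σ_{m-1}(1) = 2, σ_{m-1}(2) = 0, σ_{m-1}(k+1) = m-1, σ_{m-1}(m-1) = 1. Then F_m is a regular permutation set of order m, i.e., for every a ∈ ℤ_m, the images {σ_i(a) : 0 ≤ i ≤ m-1} equal all of ℤ_m. -/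
import Mathlib


set_option maxHeartbeats 1000000

/-- Target of the transposition paired with `γ^i` in the definition of `σ_i`. -/
def Tf (m k i : ℕ) : ℕ :=
  if i = 0 then m - 1 else if i = m - 3 then 0
  else if i % 2 = 1 then i / 2 + 2 else k + i / 2 + 1

/-- Explicit value of `(a + i) % (m - 1)` for `a, i ≤ m - 2`. -/
def Bf (m i a : ℕ) : ℕ := if a + i < m - 1 then a + i else a + i - (m - 1)

/-- The value `σ_{m-1}(a)`. -/
def Rf (m k a : ℕ) : ℕ :=
  if a = 0 then 3 else if a = 1 then 2 else if a = 2 then 0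
  else if a = k + 1 then m - 1 else if a = m - 1 then 1
  else if a ≤ k then m - a + 1 else m - a + 2

/-- The value `σ_i(a)` for `i ≤ m - 2`. -/
def Wf (m k i a : ℕ) : ℕ :=
  if a = m - 1 then Tf m k i
  else if Bf m i a = Tf m k i then m - 1 else Bf m i a

lemma Lmix (m k i a : ℕ) (hk : 2 ≤ k) (hm : m = 2 * k + 1)
    (hi : i ≤ m - 2) (ha : a ≤ m - 1) : Wf m k i a ≠ Rf m k a := by
  subst hm; simp only [Wf, Tf, Bf, Rf]; split_ifs <;> omega

lemma Linj (m k i₁ i₂ a : ℕ) (hk : 2 ≤ k) (hm : m = 2 * k + 1)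
    (h1 : i₁ ≤ m - 2) (h2 : i₂ ≤ m - 2) (ha : a ≤ m - 1)
    (h : Wf m k i₁ a = Wf m k i₂ a) : i₁ = i₂ := by
  subst hm
  by_cases haM : a = 2 * k + 1 - 1
  · simp only [Wf, if_pos haM, Tf] at h
    split_ifs at h <;> omega
  · simp only [Wf, if_neg haM] at h
    split_ifs at h with t1 t2 t2
    · simp only [Bf, Tf] at t1 t2; split_ifs at t1 t2 <;> omega
    · simp only [Bf] at h; split_ifs at h <;> omega
    · simp only [Bf] at h; split_ifs at h <;> omega
    · simp only [Bf] at h; split_ifs at h <;> omega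

lemma gamma_pow_val (m : ℕ) (hm : 2 ≤ m) (γ : Equiv.Perm (Fin m))
    (hγ : ∀ x : Fin m, (γ x).val = if x.val = m - 1 then m - 1 else (x.val + 1) % (m - 1)) :
    ∀ (n : ℕ) (x : Fin m), ((γ ^ n) x).val =
      if x.val = m - 1 then m - 1 else (x.val + n) % (m - 1) := by
  intro n
  induction n with
  | zero =>
    intro x
    rw [pow_zero]
    simp only [Equiv.Perm.coe_one, id_eq]
    split_ifs with h
    · exact h
    · have : x.val < m - 1 := by have := x.isLt; omega
      rw [Nat.add_zero, Nat.mod_eq_of_lt this]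
  | succ n ih =>
    intro x
    rw [pow_succ, Equiv.Perm.mul_apply, ih (γ x), hγ x]
    by_cases hx : x.val = m - 1
    · simp [hx]
    · have h1 : (x.val + 1) % (m - 1) < m - 1 := Nat.mod_lt _ (by omega)
      rw [if_neg hx, if_neg hx, if_neg (by omega), Nat.mod_add_mod,
        show x.val + 1 + n = x.val + (n + 1) from by omega]

lemma swap_val {m : ℕ} (u v : ℕ) (hu : u < m) (hv : v < m) (x : Fin m) :
    ((Equiv.swap (⟨u, hu⟩ : Fin m) ⟨v, hv⟩) x).val =
      if x.val = u then v else if x.val = v then u else x.val := by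
  rw [Equiv.swap_apply_def]
  split_ifs <;> simp_all [Fin.ext_iff]

lemma Bf_eq (m i a : ℕ) (hm : 2 ≤ m) (hi : i ≤ m - 2) (ha : a ≤ m - 2) :
    (a + i) % (m - 1) = Bf m i a := by
  unfold Bf
  split_ifs with h
  · exact Nat.mod_eq_of_lt h
  · rw [Nat.mod_eq_sub_mod (by omega), Nat.mod_eq_of_lt (by omega)]

lemma trans_swap_val (m k i t : ℕ) (hk : 2 ≤ k) (hm : m = 2 * k + 1)
    (γ : Equiv.Perm (Fin m))
    (hγ : ∀ x : Fin m, (γ x).val = if x.val = m - 1 then m - 1 else (x.val + 1) % (m - 1))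
    (hi : i ≤ m - 2) (ht : t ≤ m - 1) (hT : Tf m k i = t) (a : Fin m)
    (hu : m - 1 < m) (hv : t < m) :
    (((γ ^ i).trans (Equiv.swap ⟨m - 1, hu⟩ ⟨t, hv⟩)) a).val = Wf m k i a.val := by
  have hγn := gamma_pow_val m (by omega) γ hγ
  rw [Equiv.trans_apply, swap_val, hγn i a]
  by_cases hx : a.val = m - 1
  · rw [if_pos hx, if_pos rfl]
    unfold Wf
    rw [if_pos hx, hT]
  · have hb : (a.val + i) % (m - 1) = Bf m i a.val :=
      Bf_eq m i a.val (by omega) hi (by have := a.isLt; omega)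
    have hblt : Bf m i a.val < m - 1 := by
      unfold Bf; have := a.isLt; split_ifs <;> omega
    rw [if_neg hx, hb, if_neg (by omega)]
    unfold Wf
    rw [if_neg hx, hT]



/-- Let `m = 2k+1` with `k ≥ 2`, and let `γ = γ₁ = (0,1,…,m-2)(m-1)`.
Define the family `F_m = {σ₀,…,σ_{m-1}}` of permutations of `ℤ_m` by:
`σ₀ = id`; for `i = 2j+1` with `0 ≤ j ≤ k-1`, `σ_i = γ^i·(m-1, j+2)`
(composition left-to-right); for `i = 2j` with `1 ≤ j ≤ k-2`,
`σ_i = γ^i·(m-1, k+j+1)`; `σ_{m-3} = γ^{m-3}·(m-1, 0)`; and `σ_{m-1}` the single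
`m`-cycle given pointwise below.  Then `F_m` is a regular permutation set of
order `m`: for every `a ∈ ℤ_m` the map `i ↦ σ_i(a)` is a bijection of `ℤ_m`. -/
theorem construction_F_regular (m k : ℕ) (hk : 2 ≤ k) (hm : m = 2 * k + 1)
    (γ : Equiv.Perm (Fin m))
    (hγ : ∀ x : Fin m, (γ x).val = if x.val = m - 1 then m - 1 else (x.val + 1) % (m - 1))
    (σ : Fin m → Equiv.Perm (Fin m))
    (h0 : σ ⟨0, by omega⟩ = 1)
    (hodd : ∀ (j : ℕ) (hj : j ≤ k - 1),
      σ ⟨2 * j + 1, by omega⟩ =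
        (γ ^ (2 * j + 1)).trans (Equiv.swap ⟨m - 1, by omega⟩ ⟨j + 2, by omega⟩))
    (heven : ∀ (j : ℕ) (hj1 : 1 ≤ j) (hj2 : j ≤ k - 2),
      σ ⟨2 * j, by omega⟩ =
        (γ ^ (2 * j)).trans (Equiv.swap ⟨m - 1, by omega⟩ ⟨k + j + 1, by omega⟩))
    (hm3 : σ ⟨m - 3, by omega⟩ =
        (γ ^ (m - 3)).trans (Equiv.swap ⟨m - 1, by omega⟩ ⟨0, by omega⟩))
    (hlast : ∀ a : Fin m, ((σ ⟨m - 1, by omega⟩) a).val =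
        if a.val = 0 then 3
        else if a.val = 1 then 2
        else if a.val = 2 then 0
        else if a.val = k + 1 then m - 1
        else if a.val = m - 1 then 1
        else if a.val ≤ k then m - a.val + 1
        else m - a.val + 2) :
    ∀ a : Fin m, Function.Bijective (fun i : Fin m => (σ i) a) := by
  intro a
  have ham : a.val < m := a.isLt
  rw [← Finite.injective_iff_bijective]
  have hval : ∀ i : Fin m, ((σ i) a).val =
      if i.val = m - 1 then Rf m k a.val else Wf m k i.val a.val := by
    intro i
    by_cases hi : i.val = m - 1
    · rw [if_pos hi, show i = ⟨m - 1, by omega⟩ from Fin.ext hi, hlast]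
      simp only [Rf]
    · rw [if_neg hi]
      have hi2 : i.val ≤ m - 2 := by have := i.isLt; omega
      by_cases h0' : i.val = 0
      · rw [show i = ⟨0, by omega⟩ from Fin.ext h0', h0]
        show a.val = Wf m k 0 a.val
        simp only [Wf, Tf, Bf]
        split_ifs <;> omega
      · by_cases hm3' : i.val = m - 3
        · rw [show i = ⟨m - 3, by omega⟩ from Fin.ext hm3', hm3]
          exact trans_swap_val m k (m - 3) 0 hk hm γ hγ (by omega) (by omega)
            (by unfold Tf; split_ifs <;> first | contradiction | omega) a (by omega) (by omega)
        · rcases Nat.even_or_odd i.val with ⟨j, hj⟩ | ⟨j, hj⟩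
          · have hj1 : 1 ≤ j := by omega
            have hj2 : j ≤ k - 2 := by omega
            rw [show i = ⟨2 * j, by omega⟩ from Fin.ext (show i.val = 2 * j by omega), heven j hj1 hj2]
            exact trans_swap_val m k (2 * j) (k + j + 1) hk hm γ hγ (by omega) (by omega)
              (by unfold Tf; split_ifs <;> first | contradiction | omega) a (by omega) (by omega)
          · have hjk : j ≤ k - 1 := by omega
            rw [show i = ⟨2 * j + 1, by omega⟩ from Fin.ext (show i.val = 2 * j + 1 by omega), hodd j hjk]
            exact trans_swap_val m k (2 * j + 1) (j + 2) hk hm γ hγ (by omega) (by omega)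
              (by unfold Tf; split_ifs <;> first | contradiction | omega) a (by omega) (by omega)
  intro i₁ i₂ hEq
  have hv1 := i₁.isLt
  have hv2 := i₂.isLt
  have e : ((σ i₁) a).val = ((σ i₂) a).val := congrArg Fin.val hEq
  rw [hval i₁, hval i₂] at e
  apply Fin.ext
  have ha' : a.val ≤ m - 1 := by omega
  by_cases c1 : i₁.val = m - 1 <;> by_cases c2 : i₂.val = m - 1
  · omega
  · rw [if_pos c1, if_neg c2] at e
    exact absurd e.symm (Lmix m k i₂.val a.val hk hm (by omega) ha')
  · rw [if_neg c1, if_pos c2] at e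
    exact absurd e (Lmix m k i₁.val a.val hk hm (by omega) ha')
  · rw [if_neg c1, if_neg c2] at e
    exact Linj m k i₁.val i₂.val a.val hk hm (by omega) (by omega) ha' e
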